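/- Let K < 0 be a real number, n ∈ ℕ, and let x, y ∈ ℝ^{n+1} both lie on the Lorentz hyperboloid L^n_K. Then the vector w := y − K⟨x,y⟩_L·x satisfies ⟨w, x⟩_L = 0; moreover, if x ≠ y then w ≠ 0 and ⟨w,w⟩_L = (1/K)·(1 − (K⟨x,y⟩_L)²) > 0. -/

import Mathlib

/-- The Lorentzian scalar product on `ℝ^{n+1}`:
`⟨x,y⟩_L = -x₀y₀ + ∑_{i=1}^n x_i y_i`. -/
def lprod {n : ℕ} (x y : Fin (n + 1) → ℝ) : ℝ :=
  -(x 0 * y 0) + ∑ i : Fin n, x i.succ * y i.succ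


lemma lprod_comm {n : ℕ} (x y : Fin (n + 1) → ℝ) : lprod x y = lprod y x := by
  simp [lprod, mul_comm]

lemma lprod_sub_left {n : ℕ} (x y z : Fin (n + 1) → ℝ) :
    lprod (x - y) z = lprod x z - lprod y z := by
  simp [lprod, sub_mul, Finset.sum_sub_distrib]; ring

lemma lprod_smul_left {n : ℕ} (c : ℝ) (x y : Fin (n + 1) → ℝ) :
    lprod (c • x) y = c * lprod x y := by
  simp [lprod, Finset.mul_sum, mul_assoc, mul_add, mul_comm, mul_left_comm]

lemma sq_sum_eq {n : ℕ} (x : Fin (n+1) → ℝ) :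
    ∑ i : Fin n, (x i.succ) ^ 2 = ∑ i : Fin n, x i.succ * x i.succ :=
  Finset.sum_congr rfl (fun i _ => sq (x i.succ))

/-- For `K < 0` and `x, y ∈ L^n_K`, the vector `w = y − K⟨x,y⟩_L·x` is tangent
at `x` (`⟨w,x⟩_L = 0`); moreover, if `x ≠ y` then `w ≠ 0` and
`⟨w,w⟩_L = (1/K)(1 − (K⟨x,y⟩_L)²) > 0`. -/
theorem log_map_direction_tangent_and_spacelike (K : ℝ) (hK : K < 0) (n : ℕ)
    (x y : Fin (n + 1) → ℝ)
    (hx : lprod x x = 1 / K) (hx0 : x 0 > 0)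
    (hy : lprod y y = 1 / K) (hy0 : y 0 > 0)
    (w : Fin (n + 1) → ℝ) (hw : w = y - (K * lprod x y) • x) :
    lprod w x = 0 ∧
      (x ≠ y → w ≠ 0 ∧ lprod w w = (1 / K) * (1 - (K * lprod x y) ^ 2) ∧
        lprod w w > 0) := by
  have hK0 : K ≠ 0 := ne_of_lt hK
  set p := lprod x y with hp
  have horth : lprod w x = 0 := by
    rw [hw, lprod_sub_left, lprod_smul_left, hx, lprod_comm y x, ← hp]
    field_simp
    ring
  have hww : lprod w w = 1 / K - K * p ^ 2 := by
    have h1 : lprod w y = lprod y y - (K * p) * lprod x y := by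
      rw [hw, lprod_sub_left, lprod_smul_left]
    have h2 : lprod w w = lprod w y - (K * p) * lprod w x := by
      calc lprod w w = lprod w (y - (K*p) • x) := by rw [← hw]
        _ = lprod (y - (K*p) • x) w := lprod_comm _ _
        _ = lprod y w - (K*p) * lprod x w := by rw [lprod_sub_left, lprod_smul_left]
        _ = lprod w y - (K*p) * lprod w x := by rw [lprod_comm y w, lprod_comm x w]
    rw [h2, horth, h1, hy, ← hp]; ring
  refine ⟨horth, fun hne => ?_⟩
  have hwne : w ≠ 0 := by
    intro h0
    have hyx : y = (K * p) • x := by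
      have := hw.symm.trans h0
      rwa [sub_eq_zero] at this
    have hsq : (K * p) ^ 2 = 1 := by
      have h3 : lprod y y = (K * p) * ((K * p) * lprod x x) := by
        rw [hyx, lprod_smul_left, lprod_comm, lprod_smul_left, lprod_comm x]
      rw [hy, hx] at h3
      field_simp at h3
      nlinarith [h3]
    have hpos : 0 < K * p := by
      have : y 0 = (K * p) * x 0 := by rw [hyx]; simp
      nlinarith
    have h1 : K * p = 1 := by nlinarith
    apply hne
    funext j
    have : y j = (K * p) * x j := by rw [hyx]; simp
    rw [this, h1, one_mul]
  set Sw := ∑ i : Fin n, (w i.succ) ^ 2 with hSw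
  have hSx : ∑ i : Fin n, (x i.succ) ^ 2 = x 0 ^ 2 + 1 / K := by
    have h := hx; simp only [lprod] at h
    rw [sq_sum_eq]; nlinarith [h]
  have hwx : ∑ i : Fin n, w i.succ * x i.succ = w 0 * x 0 := by
    have h := horth; simp only [lprod] at h; linarith
  have hcs : (w 0 * x 0) ^ 2 ≤ Sw * (x 0 ^ 2 + 1 / K) := by
    rw [← hwx, ← hSx]
    exact Finset.sum_mul_sq_le_sq_mul_sq Finset.univ _ _
  have hSwnn : 0 ≤ Sw := Finset.sum_nonneg (fun i _ => sq_nonneg _)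
  have hlast : lprod w w > 0 := by
    rcases eq_or_lt_of_le hSwnn with hS0 | hS0
    · exfalso
      have hall : ∀ i : Fin n, w i.succ = 0 := by
        intro i
        have := (Finset.sum_eq_zero_iff_of_nonneg
          (fun i _ => sq_nonneg (w i.succ))).mp hS0.symm i (Finset.mem_univ i)
        exact pow_eq_zero_iff (two_ne_zero) |>.mp this
      have hw0 : w 0 = 0 := by
        have : (0:ℝ) = w 0 * x 0 := by
          rw [← hwx]; exact (Finset.sum_eq_zero (fun i _ => by rw [hall i, zero_mul])).symm
        have hx0' : x 0 ≠ 0 := ne_of_gt hx0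
        field_simp at this
        exact (mul_eq_zero.mp this.symm).resolve_right hx0'
      apply hwne
      funext j
      induction j using Fin.cases with
      | zero => exact hw0
      | succ i => exact hall i
    · have hlt : (w 0 * x 0) ^ 2 < Sw * x 0 ^ 2 := by nlinarith [hcs, one_div_neg.mpr hK]
      have : w 0 ^ 2 < Sw := by
        have hx2 : 0 < x 0 ^ 2 := by positivity
        nlinarith [hlt]
      have hwweq : lprod w w = -(w 0 ^ 2) + Sw := by
        simp only [lprod, hSw, sq_sum_eq w]; ring
      rw [hwweq]; linarith
  refine ⟨hwne, ?_, hlast⟩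
  rw [hww]; field_simp
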